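/- Let q > 1 and a be real numbers with |a| ≤ 2√q (the Hasse bound). Define β by β_{-1} = 0, β_0 = 1, and (q^n - 1)·β_n = (q^n + q^{n-1} - a)·β_{n-1} - (q^{n-1} - q)·β_{n-2} for n ≥ 1. Then for all n ≥ 0, β_n > 0. -/

import Mathlib

theorem beta_pos
    (q a : ℝ) (hq : 1 < q) (hHasse : |a| ≤ 2 * Real.sqrt q)
    (β : ℤ → ℝ)
    (hβm1 : β (-1) = 0) (hβ0 : β 0 = 1)
    (hrec : ∀ n : ℕ, 1 ≤ n →
      (q ^ n - 1) * β (n : ℤ) =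
        (q ^ n + q ^ (n - 1) - a) * β ((n : ℤ) - 1) - (q ^ (n - 1) - q) * β ((n : ℤ) - 2)) :
    ∀ n : ℕ, 0 < β (n : ℤ) := by
  have hq0 : (0:ℝ) < q := lt_trans one_pos hq
  have hsq : Real.sqrt q * Real.sqrt q = q := Real.mul_self_sqrt hq0.le
  have hsq1 : 1 < Real.sqrt q := by nlinarith [Real.sqrt_nonneg q]
  have ha : a < q + 1 := by
    have h1 : a ≤ 2 * Real.sqrt q := le_trans (le_abs_self a) hHasse
    nlinarith
  have hβ1 : (q - 1) * β 1 = q + 1 - a := by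
    have h := hrec 1 le_rfl
    norm_num [hβ0, hβm1] at h
    linarith
  have hb1 : 0 < β 1 := by nlinarith
  -- key invariant
  have key : ∀ n : ℕ, 0 < β ((n:ℤ) + 1) ∧
      (q ^ (n+1) - q) * β (n:ℤ) ≤ (q ^ (n+1) - q) * β ((n:ℤ) + 1) := by
    intro n
    induction n with
    | zero =>
      constructor
      · norm_num [hb1]
      · norm_num
    | succ m ih =>
      obtain ⟨ih1, ih2⟩ := ih
      have h := hrec (m + 2) (by omega)
      have e3 : (m + 2 : ℕ) - 1 = m + 1 := by omega
      rw [e3] at h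
      push_cast at h
      have e1 : (m:ℤ) + 2 - 1 = (m:ℤ) + 1 := by ring
      have e2 : (m:ℤ) + 2 - 2 = (m:ℤ) := by ring
      rw [e1, e2] at h
      have hpow : (1:ℝ) < q ^ (m + 2) := one_lt_pow₀ hq (by omega)
      have hpow2 : q ≤ q ^ (m + 2) := by
        calc q = q ^ 1 := (pow_one q).symm
        _ ≤ q ^ (m + 2) := pow_le_pow_right₀ hq.le (by omega)
      have hcoef : (q ^ (m + 2) - 1) * β ((m:ℤ) + 1) ≤ (q ^ (m + 2) - 1) * β ((m:ℤ) + 2) := by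
        nlinarith [mul_pos (by linarith : (0:ℝ) < q + 1 - a) ih1]
      have step : β ((m:ℤ) + 1) ≤ β ((m:ℤ) + 2) :=
        (mul_le_mul_iff_right₀ (by linarith : (0:ℝ) < q ^ (m+2) - 1)).mp hcoef
      have pos2 : 0 < β ((m:ℤ) + 2) := lt_of_lt_of_le ih1 step
      constructor
      · push_cast
        have e : ((m:ℤ) + 1 + 1) = (m:ℤ) + 2 := by ring
        rw [e]
        exact pos2
      · push_cast
        have e : ((m:ℤ) + 1 + 1) = (m:ℤ) + 2 := by ring
        rw [e]
        have hnn : (0:ℝ) ≤ q ^ (m + 1 + 1) - q := by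
          have : (m + 1 + 1) = m + 2 := rfl
          rw [this]; linarith
        exact mul_le_mul_of_nonneg_left step hnn
  intro n
  cases n with
  | zero => norm_num [hβ0]
  | succ m =>
    have := (key m).1
    push_cast
    exact this
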